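/- Let L be a finite-dimensional supersolvable Lie algebra over a field K, i.e., there is a chain of Lie ideals 0 = I₀ ⊆ I₁ ⊆ ⋯ ⊆ I_n = L of L with dim I_j = j for each j. Then the derived algebra ⁅L, L⁆ is a nilpotent Lie algebra. -/

import Mathlib

/-- A finite-dimensional Lie algebra is supersolvable if it admits a chain of
Lie ideals `0 = I₀ ⊆ I₁ ⊆ ⋯ ⊆ Iₙ = L` with `dim Iⱼ = j` for each `j`. -/
def LieAlgebra.IsSupersolvable (K : Type*) (L : Type*) [Field K] [LieRing L]
    [LieAlgebra K L] : Prop :=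
  ∃ (n : ℕ) (I : ℕ → LieIdeal K L),
    I 0 = ⊥ ∧ I n = ⊤ ∧ (∀ j, j < n → I j ≤ I (j + 1)) ∧
    ∀ j, j ≤ n → Module.finrank K (I j) = j

section Aux
open Module
variable {K L : Type*} [Field K] [LieRing L] [LieAlgebra K L]

/-- Any two endomorphisms of a module of rank at most one commute. -/
lemma comm_of_finrank_le_one {V : Type*} [AddCommGroup V] [Module K V]
    [Module.Finite K V] (h : Module.finrank K V ≤ 1) (f g : V →ₗ[K] V) (x : V) :
    f (g x) = g (f x) := by
  obtain ⟨v, hv⟩ := finrank_le_one_iff.mp h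
  obtain ⟨a, ha⟩ := hv x
  obtain ⟨b, hb⟩ := hv (f v)
  obtain ⟨c, hc⟩ := hv (g v)
  subst ha
  calc f (g (a • v)) = a • (c • (b • v)) := by rw [map_smul, ← hc, map_smul, map_smul, ← hb]
    _ = a • (b • (c • v)) := by rw [smul_comm b c]
    _ = g (f (a • v)) := by rw [map_smul, ← hb, map_smul, map_smul, ← hc]

/-- The adjoint action of an element of `L` restricted to a Lie ideal. -/
def adRestrict (a : L) (J : LieIdeal K L) : J →ₗ[K] J where
  toFun x := ⟨⁅a, (x : L)⁆, J.lie_mem x.2⟩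
  map_add' x y := by ext; simp
  map_smul' c x := by ext; simp

@[simp] lemma adRestrict_apply (a : L) (J : LieIdeal K L) (x : J) :
    ((adRestrict a J x : J) : L) = ⁅a, (x : L)⁆ := rfl

/-- If `I ≤ J` are Lie ideals with `J` one dimension bigger than `I`, then brackets of
elements of the derived algebra with elements of `J` land in `I`. -/
lemma lie_lie_mem_of_step [FiniteDimensional K L] {I J : LieIdeal K L} (hIJ : I ≤ J)
    (hr : finrank K J = finrank K I + 1) (a b : L) {x : L} (hx : x ∈ J) :
    ⁅⁅a, b⁆, x⁆ ∈ I := by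
  set A : Submodule K J := (I : Submodule K L).comap (J : Submodule K L).subtype with hA
  have hmem : ∀ (c : L), A ≤ A.comap (adRestrict c J) := by
    intro c y hy
    exact I.lie_mem hy
  have hrA : finrank K A = finrank K I :=
    (Submodule.comapSubtypeEquivOfLe hIJ).finrank_eq
  have hQ : finrank K (J ⧸ A) ≤ 1 := by
    have := A.finrank_quotient_add_finrank
    omega
  set q : (c : L) → (J ⧸ A) →ₗ[K] (J ⧸ A) := fun c => Submodule.mapQ A A (adRestrict c J) (hmem c)
  have key : ∀ y : J, A.mkQ (adRestrict ⁅a, b⁆ J y) = 0 := by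
    intro y
    have h1 : (adRestrict ⁅a, b⁆ J) y =
        adRestrict a J (adRestrict b J y) - adRestrict b J (adRestrict a J y) := by
      ext; simp [lie_lie]
    rw [h1, map_sub]
    have h2 : ∀ c : L, ∀ z : J, A.mkQ (adRestrict c J z) = q c (A.mkQ z) := by
      intro c z
      simp [q, Submodule.mapQ_apply, Submodule.mkQ_apply]
    rw [h2, h2, h2, h2, comm_of_finrank_le_one hQ (q a) (q b), sub_self]
  have := key ⟨x, hx⟩
  rw [Submodule.mkQ_apply, Submodule.Quotient.mk_eq_zero] at this
  exact this

/-- The set of elements whose bracket with `J` lands in `I` is a Lie ideal. -/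
def stepIdeal (I J : LieIdeal K L) : LieIdeal K L where
  carrier := {z | ∀ x ∈ J, ⁅z, x⁆ ∈ I}
  add_mem' := by intro y z hy hz x hx; rw [add_lie]; exact I.add_mem (hy x hx) (hz x hx)
  zero_mem' := by intro x hx; rw [zero_lie]; exact I.zero_mem
  smul_mem' := by intro c z hz x hx; rw [smul_lie]; exact I.smul_mem c (hz x hx)
  lie_mem := by
    intro a z hz x hx
    rw [lie_lie]
    exact I.sub_mem (I.lie_mem (hz x hx)) (hz _ (J.lie_mem hx))

lemma derived_lie_mem_of_step [FiniteDimensional K L] {I J : LieIdeal K L} (hIJ : I ≤ J)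
    (hr : finrank K J = finrank K I + 1) {z x : L}
    (hz : z ∈ LieAlgebra.derivedSeries K L 1) (hx : x ∈ J) : ⁅z, x⁆ ∈ I := by
  have h1 : LieAlgebra.derivedSeries K L 1 ≤ stepIdeal I J := by
    rw [LieAlgebra.derivedSeries_def, LieAlgebra.derivedSeriesOfIdeal_succ,
      LieAlgebra.derivedSeriesOfIdeal_zero, LieSubmodule.lie_le_iff]
    intro a _ b _
    exact fun x hx => lie_lie_mem_of_step hIJ hr a b hx
  exact h1 hz x hx

end Aux

/-- Lemma 5: the derived algebra of a finite-dimensional supersolvable Lie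
algebra is nilpotent. -/
theorem derived_nilpotent_of_supersolvable
    (K : Type*) (L : Type*) [Field K]
    [LieRing L] [LieAlgebra K L] [FiniteDimensional K L]
    (h : LieAlgebra.IsSupersolvable K L) :
    LieModule.IsNilpotent (LieAlgebra.derivedSeries K L 1) (LieAlgebra.derivedSeries K L 1) := by
  obtain ⟨n, I, hI0, hIn, hmono, hfr⟩ := h
  set L' := LieAlgebra.derivedSeries K L 1 with hL'
  have key : ∀ k, k ≤ n → ∀ x ∈ LieModule.lowerCentralSeries K (↥L') (↥L') k, (x : L) ∈ I (n - k) := by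
    intro k
    induction k with
    | zero => intro _ x _; rw [Nat.sub_zero, hIn]; trivial
    | succ k ih =>
      intro hk x hx
      have hk' : k ≤ n := Nat.le_of_succ_le hk
      let N' : LieSubmodule K (↥L') (↥L') :=
        { Submodule.comap ((L' : Submodule K L).subtype) (I (n - (k+1)) : Submodule K L) with
          lie_mem := fun {y z} hz => (I (n - (k+1))).lie_mem hz }
      have hle : LieModule.lowerCentralSeries K (↥L') (↥L') (k+1) ≤ N' := by
        rw [LieModule.lowerCentralSeries_succ, LieSubmodule.lie_le_iff]
        intro y _ m hm
        have hmL : (m : L) ∈ I (n - k) := ih hk' m hm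
        have heq : n - (k+1) + 1 = n - k := by omega
        have hstep : I (n - (k+1)) ≤ I (n - k) := by
          have h1 := hmono (n - (k+1)) (by omega)
          rwa [heq] at h1
        have hr : Module.finrank K (I (n - k)) = Module.finrank K (I (n - (k+1))) + 1 := by
          rw [hfr (n - k) (by omega), hfr (n - (k+1)) (by omega)]
          omega
        exact derived_lie_mem_of_step hstep hr y.2 hmL
      exact hle hx
  refine (LieModule.isNilpotent_iff K _ _).mpr ⟨n, ?_⟩
  rw [eq_bot_iff]
  intro x hx
  have hx0 := key n le_rfl x hx
  rw [Nat.sub_self, hI0, LieSubmodule.mem_bot] at hx0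
  rw [LieSubmodule.mem_bot]
  exact Subtype.ext hx0
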